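/- Let R be the ring of integers of a number field K and 𝔭 a nonzero prime ideal. Suppose 𝔞, 𝔞₁, …, 𝔞ₙ are fractional ideals of K with 𝔞 ∖ 𝔭𝔞 = ⋃_{i=1}^n (𝔞ᵢ ∖ 𝔭𝔞ᵢ) as subsets of K. Then there exists an index i with 𝔞 = 𝔞ᵢ. -/

import Mathlib

open IsDedekindDomain FractionalIdeal
open scoped nonZeroDivisors

section Aux

variable {R : Type*} [CommRing R] [IsDedekindDomain R] (K : Type*) [Field K] [Algebra R K]
  [IsFractionRing R K]

/-- In a Dedekind domain, given a nonzero ideal `J` and a finite nonempty set `S` of primes,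
there is a nonzero `y ∈ J` whose valuation at each prime of `S` equals that of `J`. -/
lemma exists_elem_count_eq_int (J : Ideal R) (hJ : J ≠ 0) (S : Finset (HeightOneSpectrum R))
    (hS : S.Nonempty) : ∃ y : R, y ≠ 0 ∧ y ∈ J ∧ ∀ v ∈ S,
      FractionalIdeal.count K v ((Ideal.span {y} : Ideal R) : FractionalIdeal R⁰ K)
        = FractionalIdeal.count K v (J : FractionalIdeal R⁰ K) := by
  classical
  set n : HeightOneSpectrum R → ℕ :=
    fun v => (Associates.mk v.asIdeal).count (Associates.mk J).factors with hn
  set T : Finset (HeightOneSpectrum R) := S ∪ (Ideal.finite_factors hJ).toFinset with hT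
  have hinj : ∀ v ∈ T, ∀ w ∈ T, v ≠ w → v.asIdeal ≠ w.asIdeal := by
    intro v _ w _ hvw h
    exact hvw (by cases v; cases w; simpa using h)
  have hprime : ∀ v ∈ T, Prime v.asIdeal := fun v _ => Ideal.prime_of_isPrime v.ne_bot v.isPrime
  have hstrict : ∀ v : HeightOneSpectrum R,
      ∃ z, z ∈ v.asIdeal ^ (n v) ∧ z ∉ v.asIdeal ^ (n v + 1) := fun v =>
    SetLike.exists_of_lt (Ideal.pow_succ_lt_pow v.ne_bot (n v))
  choose z hz1 hz2 using hstrict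
  obtain ⟨y, hy⟩ := IsDedekindDomain.exists_forall_sub_mem_ideal (s := T)
    (fun v => v.asIdeal) (fun v => n v + 1) hprime hinj (fun v => z v)
  have hymem : ∀ v ∈ T, y ∈ v.asIdeal ^ (n v) := by
    intro v hv
    have h1 : y - z v ∈ v.asIdeal ^ (n v + 1) := hy v hv
    have : y = (y - z v) + z v := by ring
    rw [this]
    exact add_mem (Ideal.pow_le_pow_right (Nat.le_succ _) h1) (hz1 v)
  have hynmem : ∀ v ∈ T, y ∉ v.asIdeal ^ (n v + 1) := by
    intro v hv hmem
    apply hz2 v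
    have : z v = y - (y - z v) := by ring
    rw [this]
    exact sub_mem hmem (hy v hv)
  obtain ⟨v₀, hv₀⟩ := hS
  have hv₀T : v₀ ∈ T := Finset.mem_union_left _ hv₀
  have hy0 : y ≠ 0 := by
    intro h
    exact hynmem v₀ hv₀T (h ▸ zero_mem _)
  have hprod : ∏ v ∈ T, v.asIdeal ^ (n v) = J := by
    have hsupp : (Function.mulSupport fun v : HeightOneSpectrum R =>
        v.maxPowDividing J) ⊆ ↑T := by
      intro v hv
      rw [Function.mem_mulSupport] at hv
      have hdvd : v.asIdeal ∣ J := by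
        by_contra hnd
        rw [← Associates.count_ne_zero_iff_dvd hJ v.irreducible, not_not] at hnd
        apply hv
        rw [IsDedekindDomain.HeightOneSpectrum.maxPowDividing, hnd, pow_zero]
      exact Finset.mem_coe.mpr
        (Finset.mem_union_right _ ((Ideal.finite_factors hJ).mem_toFinset.mpr hdvd))
    calc ∏ v ∈ T, v.asIdeal ^ (n v)
        = ∏ᶠ v : HeightOneSpectrum R, v.maxPowDividing J :=
          (finprod_eq_finset_prod_of_mulSupport_subset _ hsupp).symm
      _ = J := Ideal.finprod_heightOneSpectrum_factorization hJ
  have hyJ : y ∈ J := by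
    rw [← hprod, ← IsDedekindDomain.inf_prime_pow_eq_prod T _ _ hprime hinj]
    exact (Submodule.mem_finsetInf).mpr (fun v hv => hymem v hv)
  refine ⟨y, hy0, hyJ, ?_⟩
  intro v hv
  have hvT : v ∈ T := Finset.mem_union_left _ hv
  have hspan : (Ideal.span {y} : Ideal R) ≠ 0 := by
    simpa [Ideal.span_singleton_eq_bot] using hy0
  rw [FractionalIdeal.count_coe K v hspan, FractionalIdeal.count_coe K v hJ]
  congr 1
  rw [count_associates_factors_eq hspan v.isPrime v.ne_bot,
    count_associates_factors_eq hJ v.isPrime v.ne_bot]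
  have hle : Ideal.span {y} ≤ v.asIdeal ^ (n v) := by
    rw [Ideal.span_singleton_le_iff_mem]
    exact hymem v hvT
  have hlt : ¬ Ideal.span {y} ≤ v.asIdeal ^ (n v + 1) := by
    rw [Ideal.span_singleton_le_iff_mem]
    exact hynmem v hvT
  rw [Ideal.count_normalizedFactors_eq hle hlt]
  rw [hn]
  exact count_associates_factors_eq hJ v.isPrime v.ne_bot

/-- Fractional-ideal version: there is a nonzero `x ∈ 𝔞` whose valuation at each prime of
the finite nonempty set `S` equals that of `𝔞`. -/
lemma exists_elem_count_eq_frac (𝔞 : FractionalIdeal R⁰ K) (h𝔞 : 𝔞 ≠ 0)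
    (S : Finset (HeightOneSpectrum R)) (hS : S.Nonempty) :
    ∃ x : K, x ≠ 0 ∧ x ∈ 𝔞 ∧ ∀ v ∈ S,
      FractionalIdeal.count K v (spanSingleton R⁰ x) = FractionalIdeal.count K v 𝔞 := by
  obtain ⟨a, J, ha, haJ⟩ := exists_eq_spanSingleton_mul 𝔞
  have hJ : J ≠ 0 := ideal_factor_ne_zero h𝔞 haJ
  obtain ⟨y, hy0, hyJ, hycount⟩ := exists_elem_count_eq_int K J hJ S hS
  have hmapa : algebraMap R K a ≠ 0 := fun h => ha (IsFractionRing.to_map_eq_zero_iff.mp h)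
  have hmapy : algebraMap R K y ≠ 0 := fun h => hy0 (IsFractionRing.to_map_eq_zero_iff.mp h)
  have h1 : spanSingleton R⁰ (algebraMap R K y * (algebraMap R K a)⁻¹)
      = spanSingleton R⁰ ((algebraMap R K a)⁻¹) * ↑(Ideal.span {y} : Ideal R) := by
    rw [coeIdeal_span_singleton, spanSingleton_mul_spanSingleton, mul_comm]
  refine ⟨algebraMap R K y * (algebraMap R K a)⁻¹,
    mul_ne_zero hmapy (inv_ne_zero hmapa), ?_, ?_⟩
  · rw [← spanSingleton_le_iff_mem, haJ, h1]
    exact mul_le_mul_right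
      ((coeIdeal_le_coeIdeal K).mpr ((Ideal.span_singleton_le_iff_mem J).mpr hyJ)) _
  · intro v hv
    have hx0 : spanSingleton R⁰ (algebraMap R K y * (algebraMap R K a)⁻¹) ≠ 0 := by
      rw [ne_eq, spanSingleton_eq_zero_iff]
      exact mul_ne_zero hmapy (inv_ne_zero hmapa)
    rw [FractionalIdeal.count_well_defined K v hx0 h1,
      FractionalIdeal.count_well_defined K v h𝔞 haJ]
    have h2 := hycount v hv
    rw [FractionalIdeal.count_coe K v (by simpa [Ideal.span_singleton_eq_bot] using hy0),
      FractionalIdeal.count_coe K v hJ] at h2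
    rw [h2]

/-- Two nonzero fractional ideals with equal counts at every height-one prime are equal. -/
lemma eq_of_count_eq {I J : FractionalIdeal R⁰ K} (hI : I ≠ 0) (hJ : J ≠ 0)
    (h : ∀ v, FractionalIdeal.count K v I = FractionalIdeal.count K v J) : I = J := by
  rw [← FractionalIdeal.finprod_heightOneSpectrum_factorization' (K := K) hI,
    ← FractionalIdeal.finprod_heightOneSpectrum_factorization' (K := K) hJ]
  exact finprod_congr fun v => by rw [h v]

/-- For a nonzero fractional ideal `𝔠`, the set `𝔠 \ 𝔭𝔠` is nonempty. -/
lemma exists_mem_not_mem_mul (𝔭 : HeightOneSpectrum R) (𝔠 : FractionalIdeal R⁰ K)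
    (h𝔠 : 𝔠 ≠ 0) :
    ∃ x, x ∈ 𝔠 ∧ x ∉ (𝔭.asIdeal : FractionalIdeal R⁰ K) * 𝔠 := by
  have hle : (𝔭.asIdeal : FractionalIdeal R⁰ K) * 𝔠 ≤ 𝔠 := by
    have := mul_le_mul_left (coeIdeal_le_one (I := 𝔭.asIdeal) (S := R⁰) (P := K)) 𝔠
    simpa [mul_comm] using this
  have hne : (𝔭.asIdeal : FractionalIdeal R⁰ K) * 𝔠 ≠ 𝔠 := by
    intro h
    have h𝔭 : (𝔭.asIdeal : FractionalIdeal R⁰ K) ≠ 0 := coeIdeal_ne_zero.mpr 𝔭.ne_bot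
    have := FractionalIdeal.count_mul K 𝔭 h𝔭 h𝔠
    rw [h, FractionalIdeal.count_self] at this
    omega
  by_contra hc
  push_neg at hc
  exact hne (le_antisymm hle (fun x hx => hc x hx))

end Aux

/-- Independence of the family `𝒥({𝔭})`: if
`𝔞 ∖ 𝔭𝔞 = ⋃ᵢ (𝔞ᵢ ∖ 𝔭𝔞ᵢ)` then `𝔞 = 𝔞ᵢ` for some `i`. -/
theorem statement5 (K : Type*) [Field K] [NumberField K]
    (𝔭 : HeightOneSpectrum (NumberField.RingOfIntegers K))
    (𝔞 : FractionalIdeal (nonZeroDivisors (NumberField.RingOfIntegers K)) K) (h𝔞 : 𝔞 ≠ 0)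
    (n : ℕ) (𝔟 : Fin n → FractionalIdeal (nonZeroDivisors (NumberField.RingOfIntegers K)) K)
    (h𝔟 : ∀ i, 𝔟 i ≠ 0)
    (h : (𝔞 : Set K) \ ((((𝔭.asIdeal :
        FractionalIdeal (nonZeroDivisors (NumberField.RingOfIntegers K)) K)) * 𝔞) : Set K)
      = ⋃ i, ((𝔟 i : Set K) \ ((((𝔭.asIdeal :
        FractionalIdeal (nonZeroDivisors (NumberField.RingOfIntegers K)) K)) * 𝔟 i) : Set K))) :
    ∃ i, 𝔞 = 𝔟 i := by
  classical
  set R := NumberField.RingOfIntegers K with hR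
  have addmem : ∀ (𝔠 : FractionalIdeal R⁰ K) (a b : K), a ∈ 𝔠 → b ∈ 𝔠 → a + b ∈ 𝔠 :=
    fun 𝔠 a b ha hb => FractionalIdeal.mem_coe.mp
      (add_mem (FractionalIdeal.mem_coe.mpr ha) (FractionalIdeal.mem_coe.mpr hb))
  have submem : ∀ (𝔠 : FractionalIdeal R⁰ K) (a b : K), a ∈ 𝔠 → b ∈ 𝔠 → a - b ∈ 𝔠 :=
    fun 𝔠 a b ha hb => FractionalIdeal.mem_coe.mp
      (sub_mem (FractionalIdeal.mem_coe.mpr ha) (FractionalIdeal.mem_coe.mpr hb))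
  -- Step 1: each 𝔟 i is contained in 𝔞.
  have hsub : ∀ i, 𝔟 i ≤ 𝔞 := by
    intro i
    obtain ⟨x₀, hx₀1, hx₀2⟩ := exists_mem_not_mem_mul K 𝔭 (𝔟 i) (h𝔟 i)
    have hx₀u : x₀ ∈ ⋃ j, ((𝔟 j : Set K) \
        (((𝔭.asIdeal : FractionalIdeal R⁰ K) * 𝔟 j) : Set K)) :=
      Set.mem_iUnion.mpr ⟨i, ⟨hx₀1, hx₀2⟩⟩
    rw [← h] at hx₀u
    have hx₀𝔞 : x₀ ∈ 𝔞 := hx₀u.1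
    intro z hz
    by_cases hzp : z ∈ (𝔭.asIdeal : FractionalIdeal R⁰ K) * 𝔟 i
    · have h1 : z + x₀ ∈ 𝔟 i := addmem _ _ _ hz hx₀1
      have h2 : z + x₀ ∉ (𝔭.asIdeal : FractionalIdeal R⁰ K) * 𝔟 i := by
        intro hc
        exact hx₀2 (by simpa using submem _ _ _ hc hzp)
      have h3 : z + x₀ ∈ ⋃ j, ((𝔟 j : Set K) \
          (((𝔭.asIdeal : FractionalIdeal R⁰ K) * 𝔟 j) : Set K)) :=
        Set.mem_iUnion.mpr ⟨i, ⟨h1, h2⟩⟩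
      rw [← h] at h3
      have h4 : z + x₀ ∈ 𝔞 := h3.1
      simpa using submem _ _ _ h4 hx₀𝔞
    · have h3 : z ∈ ⋃ j, ((𝔟 j : Set K) \
          (((𝔭.asIdeal : FractionalIdeal R⁰ K) * 𝔟 j) : Set K)) :=
        Set.mem_iUnion.mpr ⟨i, ⟨hz, hzp⟩⟩
      rw [← h] at h3
      exact h3.1
  -- Step 2: the finite set of relevant primes.
  have hfin : ({𝔭} ∪ ({v : HeightOneSpectrum R | FractionalIdeal.count K v 𝔞 ≠ 0} ∪
      ⋃ i, {v : HeightOneSpectrum R | FractionalIdeal.count K v (𝔟 i) ≠ 0})).Finite := by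
    refine (Set.finite_singleton 𝔭).union (Set.Finite.union ?_ ?_)
    · exact Filter.eventually_cofinite.mp (FractionalIdeal.finite_factors 𝔞)
    · exact Set.finite_iUnion fun i =>
        Filter.eventually_cofinite.mp (FractionalIdeal.finite_factors (𝔟 i))
  set S : Finset (HeightOneSpectrum R) := hfin.toFinset with hSdef
  have h𝔭S : 𝔭 ∈ S := hfin.mem_toFinset.mpr (Or.inl rfl)
  -- Step 3: pick an element with exact valuations.
  obtain ⟨x, hx0, hx𝔞, hxcount⟩ := exists_elem_count_eq_frac K 𝔞 h𝔞 S ⟨𝔭, h𝔭S⟩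
  have hxspan : spanSingleton R⁰ x ≠ 0 := by rwa [ne_eq, spanSingleton_eq_zero_iff]
  have hx𝔭 : x ∉ (𝔭.asIdeal : FractionalIdeal R⁰ K) * 𝔞 := by
    intro hc
    have h1 : spanSingleton R⁰ x ≤ (𝔭.asIdeal : FractionalIdeal R⁰ K) * 𝔞 :=
      spanSingleton_le_iff_mem.mpr hc
    have h2 := FractionalIdeal.count_mono K 𝔭 hxspan h1
    have h3 := FractionalIdeal.count_mul K 𝔭
      (coeIdeal_ne_zero.mpr 𝔭.ne_bot) h𝔞
    rw [FractionalIdeal.count_self] at h3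
    rw [h3, hxcount 𝔭 h𝔭S] at h2
    omega
  have hxu : x ∈ ⋃ j, ((𝔟 j : Set K) \
      (((𝔭.asIdeal : FractionalIdeal R⁰ K) * 𝔟 j) : Set K)) := by
    rw [← h]; exact ⟨hx𝔞, hx𝔭⟩
  obtain ⟨j, hj1, -⟩ := Set.mem_iUnion.mp hxu
  refine ⟨j, eq_of_count_eq K h𝔞 (h𝔟 j) fun v => ?_⟩
  have hge : FractionalIdeal.count K v 𝔞 ≤ FractionalIdeal.count K v (𝔟 j) :=
    FractionalIdeal.count_mono K v (h𝔟 j) (hsub j)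
  have hle : FractionalIdeal.count K v (𝔟 j) ≤ FractionalIdeal.count K v 𝔞 := by
    by_cases hv : v ∈ S
    · have h1 : spanSingleton R⁰ x ≤ 𝔟 j := spanSingleton_le_iff_mem.mpr hj1
      have h2 := FractionalIdeal.count_mono K v hxspan h1
      rwa [hxcount v hv] at h2
    · have hv' := hfin.mem_toFinset.not.mp hv
      simp only [Set.mem_union, Set.mem_singleton_iff, Set.mem_iUnion, Set.mem_setOf_eq,
        not_or, not_exists, not_not] at hv'
      rw [hv'.2.1, hv'.2.2 j]
  omega
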